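/- With B = E₂₁ (rank 1) and A = E₁₂ + E₂₁ = Φ(B), the differential of Φ(X) = X + Xᵀ at B maps the tangent space T_B Σ₁ = {C : C(ker B) ⊆ im B} surjectively onto the tangent space T_A S₂ = {D symmetric : D(ker A) ⊆ im A}. Hence Φ: Σ₁∖S₁ → S₂∖S₁ is a local diffeomorphism at B. -/

import Mathlib

open Matrix

/-- With `B = E₂₁` and `A = E₁₂ + E₂₁ = Φ(B)` (on `Fin (n+2)`), the differential
`C ↦ C + Cᵀ` of `Φ(X) = X + Xᵀ` maps the tangent space
`T_B Σ₁ = {C : C(ker B) ⊆ im B}` surjectively onto the tangent space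
`T_A S₂ = {D symmetric : D(ker A) ⊆ im A}`. -/
theorem stmt14 (n : ℕ)
    (Bm Am : Matrix (Fin (n + 2)) (Fin (n + 2)) ℂ)
    (hBm : Bm = single 1 0 (1 : ℂ))
    (hAm : Am = single 0 1 (1 : ℂ) + single 1 0 (1 : ℂ)) :
    (∀ C : Matrix (Fin (n + 2)) (Fin (n + 2)) ℂ,
      (∀ v, Bm.mulVec v = 0 → C.mulVec v ∈ LinearMap.range Bm.mulVecLin) →
      (C + Cᵀ).IsSymm ∧
        ∀ v, Am.mulVec v = 0 → (C + Cᵀ).mulVec v ∈ LinearMap.range Am.mulVecLin) ∧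
    (∀ D : Matrix (Fin (n + 2)) (Fin (n + 2)) ℂ, D.IsSymm →
      (∀ v, Am.mulVec v = 0 → D.mulVec v ∈ LinearMap.range Am.mulVecLin) →
      ∃ C : Matrix (Fin (n + 2)) (Fin (n + 2)) ℂ,
        (∀ v, Bm.mulVec v = 0 → C.mulVec v ∈ LinearMap.range Bm.mulVecLin) ∧
        C + Cᵀ = D) := by
  have h01 : (0 : Fin (n + 2)) ≠ 1 := by simp [Fin.ext_iff]
  -- mulVec formulas
  have hBv : ∀ v : Fin (n + 2) → ℂ,
      Bm.mulVec v = Function.update (0 : Fin (n + 2) → ℂ) 1 (v 0) := by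
    intro v; rw [hBm, single_mulVec]; simp
  have hAv : ∀ v : Fin (n + 2) → ℂ,
      Am.mulVec v = Function.update (0 : Fin (n + 2) → ℂ) 0 (v 1)
        + Function.update (0 : Fin (n + 2) → ℂ) 1 (v 0) := by
    intro v; rw [hAm, add_mulVec, single_mulVec, single_mulVec]; simp
  -- range characterizations
  have hBr : ∀ u : Fin (n + 2) → ℂ,
      u ∈ LinearMap.range Bm.mulVecLin ↔ ∀ i, i ≠ 1 → u i = 0 := by
    intro u
    constructor
    · rintro ⟨w, rfl⟩ i hi
      rw [mulVecLin_apply, hBv]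
      simp [Function.update_apply, hi]
    · intro h
      refine ⟨fun _ => u 1, ?_⟩
      rw [mulVecLin_apply, hBv]
      funext i
      by_cases hi : i = 1
      · subst hi; simp
      · simp [Function.update_apply, hi, h i hi]
  have hAr : ∀ u : Fin (n + 2) → ℂ,
      u ∈ LinearMap.range Am.mulVecLin ↔ ∀ i, i ≠ 0 → i ≠ 1 → u i = 0 := by
    intro u
    constructor
    · rintro ⟨w, rfl⟩ i hi0 hi1
      rw [mulVecLin_apply, hAv]
      simp [Function.update_apply, hi0, hi1]
    · intro h
      refine ⟨fun k => if k = 0 then u 1 else u 0, ?_⟩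
      rw [mulVecLin_apply, hAv]
      funext i
      by_cases hi0 : i = 0
      · subst hi0; simp [Function.update_apply, h01, Ne.symm h01]
      · by_cases hi1 : i = 1
        · subst hi1; simp [Function.update_apply, Ne.symm h01]
        · simp [Function.update_apply, hi0, hi1, h i hi0 hi1]
  -- kernel characterizations
  have hBk : ∀ v : Fin (n + 2) → ℂ, v 0 = 0 → Bm.mulVec v = 0 := by
    intro v hv; rw [hBv, hv]; simp
  have hAk : ∀ v : Fin (n + 2) → ℂ, Am.mulVec v = 0 → v 0 = 0 ∧ v 1 = 0 := by
    intro v hv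
    rw [hAv] at hv
    constructor
    · have := congrFun hv 1
      simpa [Function.update_apply, Ne.symm h01] using this
    · have := congrFun hv 0
      simpa [Function.update_apply, h01] using this
  constructor
  · -- forward
    intro C hC
    -- column structure of C
    have hCcol : ∀ j : Fin (n + 2), j ≠ 0 → ∀ i, i ≠ 1 → C i j = 0 := by
      intro j hj i hi
      have hmem := hC (Pi.single j 1) (hBk _ (by simp [Pi.single_apply, Ne.symm hj]))
      have := (hBr _).mp hmem i hi
      simpa using this
    refine ⟨?_, ?_⟩
    · simp [Matrix.IsSymm, Matrix.transpose_add, add_comm]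
    · intro v hv
      obtain ⟨hv0, hv1⟩ := hAk v hv
      rw [hAr]
      intro i hi0 hi1
      simp only [Matrix.mulVec, dotProduct]
      apply Finset.sum_eq_zero
      intro j _
      rw [Matrix.add_apply, Matrix.transpose_apply]
      by_cases hj0 : j = 0
      · subst hj0; simp [hv0]
      · by_cases hj1 : j = 1
        · subst hj1; simp [hv1]
        · rw [hCcol j hj0 i hi1, hCcol i hi0 j hj1]
          simp
  · -- surjectivity
    intro D hDs hD
    have hsym : ∀ i j, D j i = D i j := by
      intro i j
      have := congrFun (congrFun hDs i) j
      simpa [Matrix.transpose_apply] using this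
    have hD2 : ∀ i j : Fin (n + 2), i ≠ 0 → i ≠ 1 → j ≠ 0 → j ≠ 1 → D i j = 0 := by
      intro i j hi0 hi1 hj0 hj1
      have hmem := hD (Pi.single j 1) (by
        rw [hAv]
        simp [Pi.single_apply, Ne.symm hj0, Ne.symm hj1])
      have := (hAr _).mp hmem i hi0 hi1
      simpa using this
    refine ⟨Matrix.of fun i j =>
      if i = 1 then (if j = 1 then D 1 1 / 2 else D 1 j)
      else if j = 0 then (if i = 0 then D 0 0 / 2 else D i 0) else 0, ?_, ?_⟩
    · intro v hv
      have hv0 : v 0 = 0 := by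
        have := congrFun ((hBv v) ▸ hv) 1
        simpa using this
      rw [hBr]
      intro i hi
      simp only [Matrix.mulVec, dotProduct, Matrix.of_apply]
      apply Finset.sum_eq_zero
      intro j _
      by_cases hj0 : j = 0
      · subst hj0; simp [hv0]
      · simp [hi, hj0]
    · funext i j
      simp only [Pi.add_apply, Matrix.add_apply, Matrix.transpose_apply, Matrix.of_apply]
      by_cases hi1 : i = 1
      · subst hi1
        by_cases hj1 : j = 1
        · subst hj1; simp [add_halves]
        · simp [hj1, Ne.symm h01, hsym]
      · by_cases hj1 : j = 1
        · subst hj1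
          simp [hi1, Ne.symm h01, hsym]
        · by_cases hi0 : i = 0
          · subst hi0
            by_cases hj0 : j = 0
            · subst hj0; simp [Ne.symm h01, add_halves]
            · simp [hj0, hj1, Ne.symm h01, hsym]
          · by_cases hj0 : j = 0
            · subst hj0; simp [hi0, hi1, Ne.symm h01]
            · simp [hi0, hi1, hj0, hj1, hD2 i j hi0 hi1 hj0 hj1]
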